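/- Let R be a binomial ring, i.e., a commutative ring with no ℤ-torsion such that for every x ∈ R and every natural number n, the element x(x−1)⋯(x−n+1)/n! of R ⊗ ℚ lies in R. Then for every prime p and every x ∈ R, the element x^p − x lies in the ideal pR. -/

import Mathlib

open Polynomial Finset

/-- In `(ZMod p)[X]`, the product of `X - a` over all `a` equals `X ^ p - X`. -/
lemma prod_X_sub_C_zmod (p : ℕ) [Fact p.Prime] :
    ∏ a : ZMod p, (X - C a) = (X ^ p - X : (ZMod p)[X]) := by
  have hcard : Fintype.card (ZMod p) = p := ZMod.card p
  have hroots : (X ^ p - X : (ZMod p)[X]).roots = Finset.univ.val := by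
    have := FiniteField.roots_X_pow_card_sub_X (ZMod p)
    rwa [hcard] at this
  have hdeg : (X ^ p - X : (ZMod p)[X]).natDegree = p := by
    have := FiniteField.X_pow_card_sub_X_natDegree_eq (ZMod p)
      (Fact.out : p.Prime).one_lt
    exact this
  have hmonic : (X ^ p - X : (ZMod p)[X]).Monic := by
    have h1 : (X : (ZMod p)[X]).degree < (X ^ p : (ZMod p)[X]).degree := by
      rw [degree_X_pow, degree_X]
      exact_mod_cast (Fact.out : p.Prime).one_lt
    simpa using (monic_X_pow p).sub_of_left h1
  have key := prod_multiset_X_sub_C_of_monic_of_roots_card_eq hmonic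
    (by rw [hroots, hdeg]; simpa using hcard)
  rw [hroots] at key
  exact key

theorem prod_range_sub_eq (p : ℕ) (hp : p.Prime) :
    ∃ g : ℤ[X], ∏ i ∈ Finset.range p, (X - C (i : ℤ)) = X ^ p - X + C (p : ℤ) * g := by
  haveI : Fact p.Prime := ⟨hp⟩
  set d : ℤ[X] := ∏ i ∈ Finset.range p, (X - C (i : ℤ)) - (X ^ p - X) with hd
  have hmap : d.map (Int.castRingHom (ZMod p)) = 0 := by
    have h1 : (∏ i ∈ Finset.range p, (X - C (i : ℤ))).map (Int.castRingHom (ZMod p))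
        = ∏ i ∈ Finset.range p, (X - C ((i : ZMod p))) := by
      rw [Polynomial.map_prod]
      exact Finset.prod_congr rfl fun i _ => by simp
    have h2 : ∏ i ∈ Finset.range p, (X - C ((i : ZMod p)))
        = ∏ a : ZMod p, (X - C a) := by
      refine Finset.prod_nbij' (s := Finset.range p) (t := Finset.univ)
        (fun i => (i : ZMod p)) (fun a => a.val) ?_ ?_ ?_ ?_ ?_
      · intro i _; exact Finset.mem_univ _
      · intro a _
        exact Finset.mem_range.mpr (ZMod.val_lt a)
      · intro i hi
        exact ZMod.val_natCast_of_lt (Finset.mem_range.mp hi)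
      · intro a _
        exact ZMod.natCast_rightInverse a
      · intro i _; rfl
    rw [hd, Polynomial.map_sub, h1, h2, prod_X_sub_C_zmod p]
    simp
  have hdvd : C (p : ℤ) ∣ d := by
    rw [C_dvd_iff_dvd_coeff]
    intro n
    have : d.coeff n = 0 → True := fun _ => trivial
    have hc : ((d.coeff n : ℤ) : ZMod p) = 0 := by
      have := congrArg (fun q => Polynomial.coeff q n) hmap
      simpa [Polynomial.coeff_map] using this
    exact_mod_cast (ZMod.intCast_zmod_eq_zero_iff_dvd _ p).mp hc
  obtain ⟨g, hg⟩ := hdvd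
  exact ⟨g, by rw [← hg, hd]; ring⟩

/-- Let R be a binomial ring, i.e. a commutative ring with no ℤ-torsion
such that for every x ∈ R and every natural number n, the element
x(x−1)⋯(x−n+1)/n! of R ⊗ ℚ lies in R (equivalently, the falling factorial
x(x−1)⋯(x−n+1) is divisible by n! in R).  Then for every prime p and every x ∈ R,
the element x^p − x lies in the ideal pR. -/
theorem binomial_ring_frobenius_congruence {R : Type*} [CommRing R]
    (htf : ∀ c : ℤ, c ≠ 0 → ∀ x : R, c • x = 0 → x = 0)
    (hbin : ∀ (x : R) (n : ℕ), ∃ y : R,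
      (n.factorial : R) * y = ∏ i ∈ Finset.range n, (x - (i : R)))
    (p : ℕ) (hp : p.Prime) (x : R) :
    x ^ p - x ∈ Ideal.span {(p : R)} := by
  obtain ⟨y, hy⟩ := hbin x p
  obtain ⟨g, hg⟩ := prod_range_sub_eq p hp
  have heval := congrArg (Polynomial.aeval x) hg
  have h1 : Polynomial.aeval x (∏ i ∈ Finset.range p, (Polynomial.X - Polynomial.C (i : ℤ)))
      = ∏ i ∈ Finset.range p, (x - (i : R)) := by
    rw [map_prod]
    exact Finset.prod_congr rfl fun i _ => by simp
  have h2 : Polynomial.aeval x ((Polynomial.X : ℤ[X]) ^ p - Polynomial.X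
      + Polynomial.C (p : ℤ) * g) = x ^ p - x + (p : R) * Polynomial.aeval x g := by
    simp
  rw [h1, h2] at heval
  rw [Ideal.mem_span_singleton]
  refine ⟨((p - 1).factorial : R) * y - Polynomial.aeval x g, ?_⟩
  have hfac : ((p.factorial : R)) = (p : R) * ((p - 1).factorial : R) := by
    rw [← Nat.mul_factorial_pred hp.ne_zero]
    push_cast
    ring
  have heval' : (p.factorial : R) * y = x ^ p - x + (p : R) * Polynomial.aeval x g :=
    hy.trans heval
  linear_combination (-1 : R) * heval' + y * hfac
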